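/- If C ⊆ M_i is a lexsegment in K[X_1,...,X_n], then the product set M_1·C = {X_j·u : u ∈ C, 1 ≤ j ≤ n} is a lexsegment in M_{i+1}. -/
import Mathlib


/-- The degree of a monomial in `K[X_1,…,X_n]`, encoded as its exponent vector
`σ : Fin n →₀ ℕ` (so `σ` encodes `X_1^{σ 0} ⋯ X_n^{σ (n-1)}`). -/
def mdeg {n : ℕ} (σ : Fin n →₀ ℕ) : ℕ := ∑ j, σ j

/-- The strict graded lexicographic order on monomials (exponent vectors), for the
variable order `X_1 > ⋯ > X_n` (coordinate `0` corresponds to `X_1`): `u < v` iff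
`deg u < deg v`, or the degrees are equal and at the first coordinate where `u, v`
differ, `u` has the smaller exponent. -/
def glexLt {n : ℕ} (u v : Fin n →₀ ℕ) : Prop :=
  mdeg u < mdeg v ∨ (mdeg u = mdeg v ∧ ∃ j : Fin n, u j < v j ∧ ∀ k, k < j → u k = v k)

/-- The graded lexicographic order: `glexLe u v` means `u ≤ v`. -/
def glexLe {n : ℕ} (u v : Fin n →₀ ℕ) : Prop := u = v ∨ glexLt u v

/-- A lexsegment in degree `i`: a set of monomials of the form `{u ∈ M_i | u ≥ v}`
for some monomial `v` of degree `i`. -/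
def IsLexSegment {n : ℕ} (i : ℕ) (C : Set (Fin n →₀ ℕ)) : Prop :=
  ∃ v : Fin n →₀ ℕ, mdeg v = i ∧ C = {u | mdeg u = i ∧ glexLe v u}

lemma mdeg_add {n : ℕ} (u v : Fin n →₀ ℕ) : mdeg (u + v) = mdeg u + mdeg v := by
  simp [mdeg, Finset.sum_add_distrib]

lemma mdeg_single {n : ℕ} (j : Fin n) : mdeg (Finsupp.single j (1:ℕ)) = 1 := by
  simp [mdeg, Finsupp.single_apply]

lemma key_apply {n : ℕ} (a : Fin n →₀ ℕ) (t k : Fin n) :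
    ((a + Finsupp.single t 1 : Fin n →₀ ℕ)) k = a k + if t = k then 1 else 0 := by
  simp [Finsupp.single_apply]

lemma mdeg_lt {n : ℕ} {a b : Fin n →₀ ℕ} (k0 : Fin n)
    (hle : ∀ k, a k ≤ b k) (hlt : a k0 < b k0) : mdeg a < mdeg b :=
  Finset.sum_lt_sum (fun k _ => hle k) ⟨k0, Finset.mem_univ _, hlt⟩

lemma glexLt_irrefl {n : ℕ} (a : Fin n →₀ ℕ) : ¬ glexLt a a := by
  rintro (h | ⟨_, j, hj, _⟩)
  · exact lt_irrefl _ h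
  · exact lt_irrefl _ hj

lemma glexLt_asymm {n : ℕ} {a b : Fin n →₀ ℕ} (h1 : glexLt a b) (h2 : glexLt b a) : False := by
  rcases h1 with h1 | ⟨hd1, j1, hj1, hk1⟩
  · rcases h2 with h2 | ⟨hd2, _⟩
    · omega
    · omega
  · rcases h2 with h2 | ⟨hd2, j2, hj2, hk2⟩
    · omega
    · rcases lt_trichotomy j1 j2 with h | h | h
      · have := hk2 j1 h; omega
      · subst h; omega
      · have := hk1 j2 h; omega

lemma glex_trichotomy {n : ℕ} {a b : Fin n →₀ ℕ} (hd : mdeg a = mdeg b) :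
    a = b ∨ glexLt a b ∨ glexLt b a := by
  by_cases h : a = b
  · exact Or.inl h
  right
  have hne : ∃ k, a k ≠ b k := by
    by_contra hc
    push_neg at hc
    exact h (Finsupp.ext hc)
  set s := Finset.univ.filter (fun k => a k ≠ b k) with hs
  have hsne : s.Nonempty := ⟨hne.choose, by simp [hs, hne.choose_spec]⟩
  set k0 := s.min' hsne with hk0
  have hmem : a k0 ≠ b k0 := by
    have := s.min'_mem hsne
    simp [hs] at this
    exact this
  have hbelow : ∀ k, k < k0 → a k = b k := by
    intro k hk
    by_contra hc
    exact absurd (s.min'_le k (by simp [hs, hc])) (not_le.mpr hk)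
  rcases lt_or_gt_of_ne hmem with h' | h'
  · exact Or.inl (Or.inr ⟨hd, k0, h', hbelow⟩)
  · exact Or.inr (Or.inr ⟨hd.symm, k0, h', fun k hk => (hbelow k hk).symm⟩)

lemma glex_forward {n : ℕ} {v u : Fin n →₀ ℕ} (L : Fin n) (hL : ∀ k, k ≤ L)
    (hd : mdeg v = mdeg u) (h : glexLe v u) (j : Fin n) :
    glexLe (v + Finsupp.single L 1) (u + Finsupp.single j 1) := by
  have hdeg : mdeg (v + Finsupp.single L 1) = mdeg (u + Finsupp.single j 1) := by
    rw [mdeg_add, mdeg_add, mdeg_single, mdeg_single, hd]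
  rcases h with rfl | h
  · by_cases hjL : j = L
    · subst hjL; exact Or.inl rfl
    · have hjlt : j < L := lt_of_le_of_ne (hL j) hjL
      refine Or.inr (Or.inr ⟨hdeg, j, ?_, ?_⟩)
      · rw [key_apply, key_apply, if_pos rfl, if_neg (ne_of_gt hjlt)]
        omega
      · intro k hk
        rw [key_apply, key_apply, if_neg (ne_of_gt hk),
          if_neg (ne_of_gt (lt_of_lt_of_le hk (le_of_lt hjlt)))]
  rcases h with h | ⟨_, j0, hj0, hbelow⟩
  · omega
  refine Or.inr (Or.inr ⟨hdeg, min j j0, ?_, ?_⟩)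
  · rw [key_apply, key_apply]
    rcases le_or_gt j0 j with hc | hc
    · have hm : min j j0 = j0 := min_eq_right hc
      rw [hm]
      have hLj : L = j0 → j = j0 := by
        intro hLe
        exact le_antisymm (hLe ▸ hL j) hc
      split_ifs with h1 h2 h2
      · omega
      · exact absurd (hLj h1) h2
      · omega
      · omega
    · have hm : min j j0 = j := min_eq_left hc.le
      rw [hm]
      have hvm : v j = u j := hbelow j hc
      have hLne : L ≠ j := ne_of_gt (lt_of_lt_of_le hc (hL j0))
      rw [if_pos rfl, if_neg hLne]
      omega
  · intro k hk
    have h1 : k < j := lt_of_lt_of_le hk (min_le_left _ _)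
    have h2 : k < j0 := lt_of_lt_of_le hk (min_le_right _ _)
    have hkL : k < L := lt_of_lt_of_le h1 (hL j)
    rw [key_apply, key_apply, if_neg (ne_of_gt h1), if_neg (ne_of_gt hkL), hbelow k h2]

lemma glex_backward {n : ℕ} {u v : Fin n →₀ ℕ} (L : Fin n) (hL : ∀ k, k ≤ L) (j : Fin n)
    (hmax : ∀ k, j < k → u k = 0) (hd : mdeg u = mdeg v) (h : glexLt u v) :
    glexLt (u + Finsupp.single j 1) (v + Finsupp.single L 1) := by
  have hdeg : mdeg (u + Finsupp.single j 1) = mdeg (v + Finsupp.single L 1) := by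
    rw [mdeg_add, mdeg_add, mdeg_single, mdeg_single, hd]
  rcases h with h | ⟨_, j0, hj0, hbelow⟩
  · omega
  rcases lt_trichotomy j j0 with hc | hc | hc
  · exfalso
    have hpt : ∀ k, u k ≤ v k := by
      intro k
      rcases lt_trichotomy k j0 with hk | hk | hk
      · exact le_of_eq (hbelow k hk)
      · subst hk; exact le_of_lt hj0
      · rw [hmax k (hc.trans hk)]; exact Nat.zero_le _
    have := mdeg_lt j0 hpt hj0
    omega
  · subst hc
    rcases lt_or_eq_of_le (Nat.succ_le_of_lt hj0) with hcase | hcase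
    · -- u j + 1 < v j
      refine Or.inr ⟨hdeg, j, ?_, ?_⟩
      · rw [key_apply, key_apply, if_pos rfl]
        have : v j ≤ v j + if L = j then 1 else 0 := Nat.le_add_right _ _
        omega
      · intro k hk
        rw [key_apply, key_apply, if_neg (ne_of_gt hk),
          if_neg (ne_of_gt (lt_of_lt_of_le hk (hL j))), hbelow k hk]
    · -- u j + 1 = v j
      by_cases hjL : j = L
      · refine Or.inr ⟨hdeg, j, ?_, ?_⟩
        · rw [key_apply, key_apply, if_pos rfl, if_pos hjL.symm]
          omega
        · intro k hk
          rw [key_apply, key_apply, if_neg (ne_of_gt hk),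
            if_neg (ne_of_gt (hjL ▸ hk)), hbelow k hk]
      · exfalso
        have hjltL : j < L := lt_of_le_of_ne (hL j) hjL
        have hpt : ∀ k, ((u + Finsupp.single j 1 : Fin n →₀ ℕ)) k ≤ ((v + Finsupp.single L 1 : Fin n →₀ ℕ)) k := by
          intro k
          rw [key_apply, key_apply]
          rcases lt_trichotomy k j with hk | hk | hk
          · rw [if_neg (ne_of_gt hk), if_neg (ne_of_gt (lt_of_lt_of_le hk (hL j))),
              hbelow k hk]
          · subst hk
            rw [if_pos rfl, if_neg (ne_of_gt hjltL)]
            omega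
          · rw [hmax k hk, if_neg (ne_of_lt hk)]
            omega
        have hstrict : ((u + Finsupp.single j 1 : Fin n →₀ ℕ)) L < ((v + Finsupp.single L 1 : Fin n →₀ ℕ)) L := by
          rw [key_apply, key_apply, if_pos rfl, if_neg (ne_of_lt hjltL), hmax L hjltL]
          omega
        have := mdeg_lt L hpt hstrict
        omega
  · refine Or.inr ⟨hdeg, j0, ?_, ?_⟩
    · rw [key_apply, key_apply, if_neg (ne_of_gt hc)]
      have : v j0 ≤ v j0 + if L = j0 then 1 else 0 := Nat.le_add_right _ _
      omega
    · intro k hk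
      rw [key_apply, key_apply, if_neg (ne_of_gt (hk.trans hc)),
        if_neg (ne_of_gt (lt_of_lt_of_le hk (hL j0))), hbelow k hk]

lemma exists_decomp {n : ℕ} {w : Fin n →₀ ℕ} (hw : w ≠ 0) :
    ∃ u j, w = u + Finsupp.single j 1 ∧ (∀ k, j < k → u k = 0) := by
  have hs : w.support.Nonempty := Finsupp.support_nonempty_iff.mpr hw
  set j := w.support.max' hs with hj
  have hj1 : w j ≠ 0 := Finsupp.mem_support_iff.mp (w.support.max'_mem hs)
  have hzero : ∀ k, j < k → w k = 0 := by
    intro k hk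
    by_contra hc
    exact absurd (w.support.le_max' k (Finsupp.mem_support_iff.mpr hc)) (not_le.mpr hk)
  refine ⟨w - Finsupp.single j 1, j, ?_, ?_⟩
  · ext k
    rcases eq_or_ne k j with rfl | hk
    · rw [key_apply, Finsupp.tsub_apply, Finsupp.single_apply, if_pos rfl]
      omega
    · simp [key_apply, Finsupp.tsub_apply, Finsupp.single_apply, Ne.symm hk]
  · intro k hk
    rw [Finsupp.tsub_apply, hzero k hk]
    simp

/-- If `C ⊆ M_i` is a lexsegment in `K[X_1,…,X_n]`, then the product set
`M_1·C = {X_j·u : u ∈ C, 1 ≤ j ≤ n}` is a lexsegment in `M_{i+1}`. (Multiplying a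
monomial with exponent vector `u` by `X_j` corresponds to `u + single j 1`.) -/
theorem stmt4 (n : ℕ) (hn : 1 ≤ n) (i : ℕ) (C : Set (Fin n →₀ ℕ))
    (hC : IsLexSegment i C) :
    IsLexSegment (i + 1)
      {w : Fin n →₀ ℕ | ∃ u ∈ C, ∃ j : Fin n, w = u + Finsupp.single j 1} := by
  refine ?_
  obtain ⟨v, hv, rfl⟩ := hC
  have hn' : n - 1 < n := by omega
  set L : Fin n := ⟨n - 1, hn'⟩ with hLdef
  have hL : ∀ k : Fin n, k ≤ L := by
    intro k
    have := k.2
    rw [Fin.le_def]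
    simp [hLdef]
    omega
  refine ⟨v + Finsupp.single L 1, by rw [mdeg_add, mdeg_single, hv], ?_⟩
  ext w
  simp only [Set.mem_setOf_eq]
  constructor
  · rintro ⟨u, ⟨hu1, hu2⟩, j, rfl⟩
    exact ⟨by rw [mdeg_add, mdeg_single, hu1], glex_forward L hL (by rw [hv, hu1]) hu2 j⟩
  · rintro ⟨hw1, hw2⟩
    have hwne : w ≠ 0 := by
      intro h
      rw [h] at hw1
      simp [mdeg] at hw1
    obtain ⟨u, j, rfl, hmax⟩ := exists_decomp hwne
    have hdu : mdeg u = i := by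
      rw [mdeg_add, mdeg_single] at hw1
      omega
    refine ⟨u, ⟨hdu, ?_⟩, j, rfl⟩
    rcases glex_trichotomy (show mdeg v = mdeg u by rw [hv, hdu]) with h | h | h
    · exact Or.inl h
    · exact Or.inr h
    · exfalso
      have hb := glex_backward L hL j hmax (by rw [hv, hdu]) h
      rcases hw2 with h2 | h2
      · rw [← h2] at hb
        exact glexLt_irrefl _ hb
      · exact glexLt_asymm hb h2
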